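/- Let a_1 > a_2 > ... > a_{2n} be distinct reals placed on n cards (a perfect pairing of the 2n values), and independently for each card one side is designated 'face-down' (X) and the other 'face-up' (Y), each with probability 1/2. Suppose the top i+j+1 values a_1, ..., a_{i+j+1} all lie on distinct cards. Let X^{i+1} be the (i+1)-st largest face-down value and Y^{j+1} the (j+1)-st largest face-up value. Then Pr[X^{i+1} > Y^{j+1}] = Σ_{k=0}^{j} C(i+k, k)/2^{i+k+1}. -/

import Mathlib

open scoped Classical

/-- The `k`-th largest element (1-indexed) of a finite set of reals, defaulting to `0`. -/
noncomputable def kthLargest (s : Finset ℝ) (k : ℕ) : ℝ :=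
  ((s.sort (· ≤ ·)).reverse).getD (k - 1) 0

/-- The probability of an event under the uniform distribution on a finite type. -/
noncomputable def uniformPr {α : Type*} [Fintype α] (E : α → Prop) : ℝ :=
  ((Finset.univ.filter E).card : ℝ) / (Fintype.card α : ℝ)

open Finset

private lemma listA : ∀ (l : List ℝ), l.Pairwise (· ≥ ·) → ∀ k, k < l.length → ∀ c : ℝ,
    (c < l.getD k 0 ↔ k + 1 ≤ (l.filter (fun x => decide (c < x))).length) := by
  intro l
  induction l with
  | nil => intro _ k hk; simp at hk
  | cons x xs ih =>
    intro hs k hk c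
    have hx : ∀ y ∈ xs, y ≤ x := fun y hy => (List.pairwise_cons.1 hs).1 y hy
    have hxs : xs.Pairwise (· ≥ ·) := (List.pairwise_cons.1 hs).2
    cases k with
    | zero =>
      simp only [List.getD_cons_zero]
      constructor
      · intro h
        rw [List.filter_cons]
        simp [h]
      · intro h
        by_contra hc
        push_neg at hc
        have : (x :: xs).filter (fun x => decide (c < x)) = xs.filter (fun x => decide (c < x)) := by
          rw [List.filter_cons]; simp [not_lt.2 hc]
        rw [this] at h
        have hemp : xs.filter (fun x => decide (c < x)) = [] := by
          rw [List.filter_eq_nil_iff]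
          intro y hy
          simp only [decide_eq_true_eq]
          exact not_lt.2 ((hx y hy).trans hc)
        rw [hemp] at h; simp at h
    | succ k =>
      have hk' : k < xs.length := by simpa using hk
      have hmem : xs.getD k 0 ∈ xs := by
        rw [List.getD_eq_getElem _ _ hk']
        exact List.getElem_mem _
      simp only [List.getD_cons_succ]
      rw [ih hxs k hk' c]
      rw [List.filter_cons]
      by_cases hcx : c < x
      · simp [hcx]
      · simp only [hcx, decide_false]
        have hemp : xs.filter (fun x => decide (c < x)) = [] := by
          rw [List.filter_eq_nil_iff]
          intro y hy
          simp only [decide_eq_true_eq]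
          exact not_lt.2 ((hx y hy).trans (not_lt.1 hcx))
        simp only [if_neg, hemp]
        simp

private lemma sortFilterLen (s : Finset ℝ) (p : ℝ → Prop) [DecidablePred p] :
    ((s.sort (· ≤ ·)).filter (fun x => decide (p x))).length = (s.filter p).card := by
  rw [← List.countP_eq_length_filter, (Finset.sort_perm_toList s _).countP_eq]
  rw [Finset.card_filter]
  rw [Finset.toList]
  rw [← Multiset.coe_countP, Multiset.coe_toList]
  simp [Multiset.countP_eq_card_filter, Finset.filter]

private lemma kthLargest_gt_iff (s : Finset ℝ) (k : ℕ) (hk1 : 1 ≤ k) (hks : k ≤ s.card)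
    (c : ℝ) : c < kthLargest s k ↔ k ≤ (s.filter (fun x => c < x)).card := by
  have hrev : (s.sort (· ≤ ·)).reverse.Pairwise (· ≥ ·) := by
    rw [List.pairwise_reverse]
    exact (Finset.pairwise_sort s (· ≤ ·)).imp (fun h => h)
  have hlen : (s.sort (· ≤ ·)).reverse.length = s.card := by
    rw [List.length_reverse, Finset.length_sort]
  have hklt : k - 1 < (s.sort (· ≤ ·)).reverse.length := by rw [hlen]; omega
  have hmain := listA _ hrev (k - 1) hklt c
  unfold kthLargest
  rw [hmain, List.filter_reverse, List.length_reverse, sortFilterLen s (fun x => c < x)]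
  omega

private lemma natId (i : ℕ) : ∀ j : ℕ, ∑ k ∈ range (j+1), (i+j+1).choose (i+1+k) =
    ∑ k ∈ range (j+1), (i+k).choose k * 2 ^ (j-k) := by
  intro j
  induction j with
  | zero => simp
  | succ j ih =>
    have pascal : ∀ k ∈ range (j+2), (i+(j+1)+1).choose (i+1+k)
        = (i+j+1).choose (i+1+k) + (i+j+1).choose (i+k) := by
      intro k _
      have h1 : i+(j+1)+1 = (i+j+1) + 1 := by ring
      rw [h1]
      have h2 : i+1+k = (i+k) + 1 := by ring
      rw [h2, Nat.choose_succ_succ']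
      ring_nf
    rw [Finset.sum_congr rfl pascal, Finset.sum_add_distrib]
    have h1 : ∑ k ∈ range (j+2), (i+j+1).choose (i+1+k)
        = ∑ k ∈ range (j+1), (i+j+1).choose (i+1+k) := by
      rw [Finset.sum_range_succ]
      have : (i+j+1).choose (i+1+(j+1)) = 0 := Nat.choose_eq_zero_of_lt (by omega)
      rw [this, add_zero]
    have h2 : ∑ k ∈ range (j+2), (i+j+1).choose (i+k) =
        (i+j+1).choose i + ∑ k ∈ range (j+1), (i+j+1).choose (i+1+k) := by
      rw [Finset.sum_range_succ']
      simp only [add_zero]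
      rw [add_comm]
      congr 1
      apply Finset.sum_congr rfl
      intro k _
      congr 1
      omega
    rw [h1, h2, ih]
    rw [Finset.sum_range_succ (fun k => (i+k).choose k * 2^(j+1-k))]
    have h3 : ∀ k ∈ range (j+1), (i+k).choose k * 2^(j+1-k) = 2 * ((i+k).choose k * 2^(j-k)) := by
      intro k hk
      simp only [mem_range] at hk
      have : j+1-k = (j-k)+1 := by omega
      rw [this, pow_succ]
      ring
    rw [Finset.sum_congr rfl h3, ← Finset.mul_sum]
    have h4 : (i+j+1).choose i = (i+(j+1)).choose (j+1) := by
      rw [show i+(j+1) = i+j+1 by ring]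
      rw [← Nat.choose_symm (by omega : i ≤ i+j+1)]
      congr 1
      omega
    rw [h4]
    simp only [Nat.sub_self, pow_zero, mul_one]
    ring

private lemma uniformPr_equiv {α β : Type*} [Fintype α] [Fintype β] (e : α ≃ β)
    (E : α → Prop) (E' : β → Prop) (h : ∀ x, E x ↔ E' (e x)) :
    uniformPr E = uniformPr E' := by
  unfold uniformPr
  rw [Fintype.card_congr e]
  congr 2
  apply Finset.card_bij' (fun x _ => e x) (fun y _ => e.symm y)
  · intro x hx
    simp only [mem_filter, mem_univ, true_and] at hx ⊢
    exact (h x).1 hx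
  · intro y hy
    simp only [mem_filter, mem_univ, true_and] at hy ⊢
    exact (h _).2 (by simpa using hy)
  · intro x _; simp
  · intro y _; simp

private def pairEquiv {N : ℕ} (pair : Fin N → Fin N)
    (hinv : ∀ x, pair (pair x) = x) (hnf : ∀ x, pair x ≠ x)
    (S : Finset (Fin N)) (hmemS : ∀ x : Fin N, x < pair x → x ∈ S)
    (hmemS' : ∀ x : Fin N, ¬ x < pair x → pair x ∈ S)
    (hmemS'' : ∀ x : Fin N, x ∈ S → x < pair x) :
    {f : Fin N → Bool // ∀ x, f (pair x) = !(f x)} ≃ (↥S → Bool) :=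
  { toFun := fun f z => f.1 z.1
    invFun := fun g => ⟨fun x => if h : x < pair x then g ⟨x, hmemS x h⟩
        else !g ⟨pair x, hmemS' x h⟩, by
      intro x
      by_cases h : x < pair x
      · have h2 : ¬ pair x < pair (pair x) := by rw [hinv]; exact asymm h
        simp only [dif_pos h, dif_neg h2]
        congr 2
        exact Subtype.ext (hinv x)
      · have h1 : pair x < x := lt_of_le_of_ne (not_lt.1 h) (hnf x)
        have h2 : pair x < pair (pair x) := by rw [hinv]; exact h1
        simp only [dif_neg h, dif_pos h2, Bool.not_not]⟩
    left_inv := by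
      intro f
      apply Subtype.ext
      funext x
      by_cases h : x < pair x
      · simp only [dif_pos h]
      · simp only [dif_neg h, f.2 x, Bool.not_not]
    right_inv := by
      intro g
      funext z
      have hz : z.1 < pair z.1 := hmemS'' z.1 z.2
      simp only [dif_pos hz] }

theorem no_pairs_cross_rank_probability (n i j : ℕ)
    (hi : i + 1 ≤ n) (hj : j + 1 ≤ n)
    (a : Fin (2 * n) → ℝ) (ha : StrictAnti a)
    (pair : Fin (2 * n) → Fin (2 * n))
    (hinv : ∀ x, pair (pair x) = x) (hnf : ∀ x, pair x ≠ x)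
    (htop : ∀ x : Fin (2 * n), (x : ℕ) < i + j + 1 → i + j + 1 ≤ ((pair x : ℕ))) :
    uniformPr (fun f : {f : Fin (2 * n) → Bool // ∀ x, f (pair x) = !(f x)} =>
        kthLargest ((Finset.univ.filter (fun x => f.1 x = true)).image a) (i + 1) >
          kthLargest ((Finset.univ.filter (fun x => f.1 x = false)).image a) (j + 1)) =
      ∑ k ∈ Finset.range (j + 1), (Nat.choose (i + k) k : ℝ) / 2 ^ (i + k + 1) := by
  classical
  set m : ℕ := i + j + 1 with hmdef
  have hm2n : m < 2 * n := by omega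
  have hpinj : Function.Injective pair := by
    intro x y hxy
    have h := congrArg pair hxy
    rwa [hinv, hinv] at h
  -- cardinality of the set of indices below a bound
  have hcard_lt : ∀ M : ℕ, M ≤ 2 * n →
      (univ.filter (fun x : Fin (2*n) => (x:ℕ) < M)).card = M := by
    intro M hM
    have himg : (univ.filter (fun x : Fin (2*n) => (x:ℕ) < M)).image Fin.val
        = Finset.range M := by
      ext t
      simp only [Finset.mem_image, Finset.mem_filter, mem_univ, true_and, Finset.mem_range]
      constructor
      · rintro ⟨x, hx, rfl⟩
        exact hx
      · intro ht
        exact ⟨⟨t, by omega⟩, ht, rfl⟩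
    have := congrArg Finset.card himg
    rwa [Finset.card_image_of_injective _ Fin.val_injective, Finset.card_range] at this
  have hmn : m ≤ n := by
    have hsub : (univ.filter (fun x : Fin (2*n) => (x:ℕ) < m)).image pair
        ⊆ univ.filter (fun x : Fin (2*n) => ¬ ((x:ℕ) < m)) := by
      intro y hy
      simp only [mem_image, mem_filter, mem_univ, true_and] at hy ⊢
      obtain ⟨x, hx, rfl⟩ := hy
      have := htop x hx
      omega
    have h1 := Finset.card_le_card hsub
    rw [Finset.card_image_of_injective _ hpinj, hcard_lt m (by omega)] at h1
    have h2 := Finset.card_filter_add_card_filter_not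
      (s := (univ : Finset (Fin (2*n)))) (fun x : Fin (2*n) => (x:ℕ) < m)
    rw [hcard_lt m (by omega), Finset.card_univ, Fintype.card_fin] at h2
    omega
  -- the transversal S
  set S : Finset (Fin (2*n)) := univ.filter (fun x => x < pair x) with hSdef
  have hmemS : ∀ x : Fin (2*n), x < pair x → x ∈ S := by
    intro x h; simp [hSdef, h]
  have hmemS' : ∀ x : Fin (2*n), ¬ x < pair x → pair x ∈ S := by
    intro x h
    have h1 : pair x < x := lt_of_le_of_ne (not_lt.1 h) (hnf x)
    simp only [hSdef, mem_filter, mem_univ, true_and, hinv]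
    exact h1
  have hcardS : S.card = n := by
    have h1 : S.card = (univ.filter (fun x : Fin (2*n) => ¬ x < pair x)).card := by
      apply Finset.card_bij' (fun x _ => pair x) (fun y _ => pair y)
      · intro x hx
        simp only [hSdef, mem_filter, mem_univ, true_and] at hx ⊢
        rw [hinv]
        exact not_lt.2 (le_of_lt hx)
      · intro y hy
        simp only [hSdef, mem_filter, mem_univ, true_and] at hy ⊢
        rw [hinv]
        exact lt_of_le_of_ne (not_lt.1 hy) (hnf y)
      · intro x _; exact hinv x
      · intro y _; exact hinv y
    have h2 := Finset.card_filter_add_card_filter_not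
      (s := (univ : Finset (Fin (2*n)))) (fun x : Fin (2*n) => x < pair x)
    rw [Finset.card_univ, Fintype.card_fin] at h2
    have h3 : (univ.filter (fun x : Fin (2*n) => x < pair x)).card = S.card := rfl
    omega
  have hmemS'' : ∀ x : Fin (2*n), x ∈ S → x < pair x := by
    intro x hx
    simp only [hSdef, mem_filter, mem_univ, true_and] at hx
    exact hx
  -- the event on S → Bool
  set S₀ : Finset ↥S := univ.filter (fun z : ↥S => (z.1 : ℕ) < m) with hS₀def
  have hS₀card : S₀.card = m := by
    have himg : S₀.image Subtype.val = univ.filter (fun x : Fin (2*n) => (x:ℕ) < m) := by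
      ext x
      simp only [hS₀def, Finset.mem_image, Finset.mem_filter, mem_univ, true_and]
      constructor
      · rintro ⟨z, hz, rfl⟩
        exact hz
      · intro hx
        have hxS : x ∈ S := by
          apply hmemS
          have := htop x hx
          rw [Fin.lt_def]
          omega
        exact ⟨⟨x, hxS⟩, hx, rfl⟩
    have h := congrArg Finset.card himg
    rwa [Finset.card_image_of_injective _ Subtype.val_injective, hcard_lt m (by omega)] at h
  set E' : (↥S → Bool) → Prop := fun g =>
    i + 1 ≤ (univ.filter (fun z : ↥S => (z.1 : ℕ) < m ∧ g z = true)).card with hE'def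
  -- event equivalence
  have hEq : ∀ f : {f : Fin (2*n) → Bool // ∀ x, f (pair x) = !(f x)},
      (kthLargest ((univ.filter (fun x => f.1 x = true)).image a) (i + 1) >
        kthLargest ((univ.filter (fun x => f.1 x = false)).image a) (j + 1)) ↔ E' (pairEquiv pair hinv hnf S hmemS hmemS' hmemS'' f) := by
    intro f
    set A : Finset (Fin (2*n)) := univ.filter (fun x => f.1 x = true) with hAdef
    set B : Finset (Fin (2*n)) := univ.filter (fun x => f.1 x = false) with hBdef
    have hBneg : B = univ.filter (fun x => ¬ (f.1 x = true)) := by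
      apply Finset.filter_congr
      intro x _
      cases hfx : f.1 x <;> simp
    have hABcard : A.card = B.card := by
      apply Finset.card_bij' (fun x _ => pair x) (fun y _ => pair y)
      · intro x hx
        simp only [hAdef, hBdef, mem_filter, mem_univ, true_and] at hx ⊢
        rw [f.2 x, hx]
        rfl
      · intro y hy
        simp only [hAdef, hBdef, mem_filter, mem_univ, true_and] at hy ⊢
        rw [f.2 y, hy]
        rfl
      · intro x _; exact hinv x
      · intro y _; exact hinv y
    have hABsum : A.card + B.card = 2 * n := by
      rw [hBneg]
      have := Finset.card_filter_add_card_filter_not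
        (s := (univ : Finset (Fin (2*n)))) (fun x : Fin (2*n) => f.1 x = true)
      rw [Finset.card_univ, Fintype.card_fin] at this
      exact this
    have hAcard : A.card = n := by omega
    have hBcard : B.card = n := by omega
    have hXcard : (A.image a).card = n := by
      rw [Finset.card_image_of_injective _ ha.injective, hAcard]
    have hYcard : (B.image a).card = n := by
      rw [Finset.card_image_of_injective _ ha.injective, hBcard]
    set t : ℕ := (univ.filter (fun x : Fin (2*n) => (x:ℕ) < m ∧ f.1 x = true)).card with htdef
    set t' : ℕ := (univ.filter (fun x : Fin (2*n) => (x:ℕ) < m ∧ f.1 x = false)).card with ht'def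
    have htt' : t + t' = m := by
      have hp1 : univ.filter (fun x : Fin (2*n) => (x:ℕ) < m ∧ f.1 x = true)
          = (univ.filter (fun x : Fin (2*n) => (x:ℕ) < m)).filter (fun x => f.1 x = true) := by
        rw [Finset.filter_filter]
      have hp2 : univ.filter (fun x : Fin (2*n) => (x:ℕ) < m ∧ f.1 x = false)
          = (univ.filter (fun x : Fin (2*n) => (x:ℕ) < m)).filter (fun x => ¬ (f.1 x = true)) := by
        rw [Finset.filter_filter]
        apply Finset.filter_congr
        intro x _
        cases hfx : f.1 x <;> simp [hfx]
      have := Finset.card_filter_add_card_filter_not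
        (s := univ.filter (fun x : Fin (2*n) => (x:ℕ) < m)) (fun x : Fin (2*n) => f.1 x = true)
      rw [hcard_lt m (by omega)] at this
      rw [htdef, ht'def, hp1, hp2]
      exact this
    -- step 1: threshold characterization
    have hiff1 : (kthLargest (A.image a) (i + 1) > kthLargest (B.image a) (j + 1)) ↔
        (∃ c : ℝ, i + 1 ≤ (A.filter (fun x => c < a x)).card ∧
          (B.filter (fun x => c < a x)).card ≤ j) := by
      constructor
      · intro hgt
        refine ⟨kthLargest (B.image a) (j + 1), ?_, ?_⟩
        · have h := (kthLargest_gt_iff (A.image a) (i+1) (by omega)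
            (by rw [hXcard]; omega) _).1 hgt
          rwa [Finset.filter_image, Finset.card_image_of_injective _ ha.injective] at h
        · by_contra hc
          push_neg at hc
          have h := (kthLargest_gt_iff (B.image a) (j+1) (by omega)
            (by rw [hYcard]; omega) (kthLargest (B.image a) (j+1))).2 (by
              rw [Finset.filter_image, Finset.card_image_of_injective _ ha.injective]
              omega)
          exact lt_irrefl _ h
      · rintro ⟨c, h1, h2⟩
        have hA : c < kthLargest (A.image a) (i+1) := by
          apply (kthLargest_gt_iff (A.image a) (i+1) (by omega) (by rw [hXcard]; omega) c).2
          rw [Finset.filter_image, Finset.card_image_of_injective _ ha.injective]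
          exact h1
        have hB : ¬ (c < kthLargest (B.image a) (j+1)) := by
          intro hc
          have h := (kthLargest_gt_iff (B.image a) (j+1) (by omega)
            (by rw [hYcard]; omega) c).1 hc
          rw [Finset.filter_image, Finset.card_image_of_injective _ ha.injective] at h
          omega
        exact lt_of_le_of_lt (not_lt.1 hB) hA
    -- step 2: threshold to counting
    have hiff2 : (∃ c : ℝ, i + 1 ≤ (A.filter (fun x => c < a x)).card ∧
          (B.filter (fun x => c < a x)).card ≤ j) ↔ i + 1 ≤ t := by
      constructor
      · rintro ⟨c, h1, h2⟩
        by_contra hle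
        push_neg at hle
        have hex : ∃ x ∈ A, c < a x ∧ ¬ ((x:ℕ) < m) := by
          by_contra h
          push_neg at h
          have hsub : A.filter (fun x => c < a x)
              ⊆ univ.filter (fun x : Fin (2*n) => (x:ℕ) < m ∧ f.1 x = true) := by
            intro x hx
            simp only [hAdef, Finset.mem_filter, mem_univ, true_and] at hx ⊢
            exact ⟨h x (by simp [hAdef, hx.1]) hx.2, hx.1⟩
          have := Finset.card_le_card hsub
          omega
        obtain ⟨x, hxA, hcx, hxm⟩ := hex
        have hall : univ.filter (fun y : Fin (2*n) => (y:ℕ) < m ∧ f.1 y = false)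
            ⊆ B.filter (fun y => c < a y) := by
          intro y hy
          simp only [hBdef, Finset.mem_filter, mem_univ, true_and] at hy ⊢
          refine ⟨hy.2, lt_trans hcx (ha ?_)⟩
          rw [Fin.lt_def]
          omega
        have := Finset.card_le_card hall
        omega
      · intro hit
        refine ⟨a ⟨m, hm2n⟩, ?_, ?_⟩
        · have hsub : univ.filter (fun x : Fin (2*n) => (x:ℕ) < m ∧ f.1 x = true)
              ⊆ A.filter (fun x => a ⟨m, hm2n⟩ < a x) := by
            intro x hx
            simp only [hAdef, Finset.mem_filter, mem_univ, true_and] at hx ⊢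
            refine ⟨hx.2, ha ?_⟩
            rw [Fin.lt_def]
            exact hx.1
          have := Finset.card_le_card hsub
          omega
        · have hsub : B.filter (fun x => a ⟨m, hm2n⟩ < a x)
              ⊆ univ.filter (fun y : Fin (2*n) => (y:ℕ) < m ∧ f.1 y = false) := by
            intro x hx
            simp only [hBdef, Finset.mem_filter, mem_univ, true_and] at hx ⊢
            refine ⟨?_, hx.1⟩
            have := ha.lt_iff_gt.1 hx.2
            rw [Fin.lt_def] at this
            exact this
          have := Finset.card_le_card hsub
          omega
    -- step 3: transfer the count to S
    have hcount : t = (univ.filter (fun z : ↥S => (z.1 : ℕ) < m ∧ f.1 z.1 = true)).card := by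
      have himg : (univ.filter (fun z : ↥S => (z.1 : ℕ) < m ∧ f.1 z.1 = true)).image Subtype.val
          = univ.filter (fun x : Fin (2*n) => (x:ℕ) < m ∧ f.1 x = true) := by
        ext x
        simp only [Finset.mem_image, Finset.mem_filter, mem_univ, true_and]
        constructor
        · rintro ⟨z, hz, rfl⟩
          exact hz
        · intro hx
          have hxS : x ∈ S := by
            apply hmemS
            have := htop x hx.1
            rw [Fin.lt_def]
            omega
          exact ⟨⟨x, hxS⟩, hx, rfl⟩
      have h := congrArg Finset.card himg
      rw [Finset.card_image_of_injective _ Subtype.val_injective] at h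
      rw [htdef, ← h]
    rw [hiff1, hiff2, hcount]
    rfl
  -- transfer the probability through e
  rw [uniformPr_equiv (pairEquiv pair hinv hnf S hmemS hmemS' hmemS'') _ E' hEq]
  -- now count on S → Bool
  unfold uniformPr
  rw [Fintype.card_fun, Fintype.card_coe, hcardS, Fintype.card_bool]
  -- the count N
  have hbij : (@Finset.filter _ E' (fun g => Classical.propDecidable _) univ).card
      = (univ.filter (fun T : Finset ↥S => i + 1 ≤ (T ∩ S₀).card)).card := by
    apply Finset.card_bij' (fun g _ => univ.filter (fun z : ↥S => g z = true))
      (fun T _ => fun z => decide (z ∈ T))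
    · intro g hg
      simp only [Finset.mem_filter, mem_univ, true_and] at hg ⊢
      have hTS : univ.filter (fun z : ↥S => g z = true) ∩ S₀
          = univ.filter (fun z : ↥S => (z.1 : ℕ) < m ∧ g z = true) := by
        ext z
        simp only [hS₀def, Finset.mem_inter, Finset.mem_filter, mem_univ, true_and]
        tauto
      rw [hTS]
      exact hg
    · intro T hT
      simp only [Finset.mem_filter, mem_univ, true_and] at hT ⊢
      have hTS : univ.filter (fun z : ↥S => (z.1 : ℕ) < m ∧ decide (z ∈ T) = true)
          = T ∩ S₀ := by
        ext z
        simp only [hS₀def, Finset.mem_inter, Finset.mem_filter, mem_univ, true_and,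
          decide_eq_true_eq]
        tauto
      rw [hE'def]
      simp only []
      rw [hTS]
      exact hT
    · intro g _
      funext z
      simp
    · intro T _
      ext z
      simp
  rw [hbij]
  -- fiberwise count
  set tset : Finset (Finset ↥S) := S₀.powerset.filter (fun A => i + 1 ≤ A.card) with htsetdef
  have hfibermap : ∀ T ∈ univ.filter (fun T : Finset ↥S => i + 1 ≤ (T ∩ S₀).card),
      T ∩ S₀ ∈ tset := by
    intro T hT
    simp only [Finset.mem_filter, mem_univ, true_and] at hT
    simp only [htsetdef, Finset.mem_filter, Finset.mem_powerset]
    exact ⟨Finset.inter_subset_right, hT⟩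
  have hcount1 := Finset.card_eq_sum_card_fiberwise hfibermap
  have hfiber : ∀ A ∈ tset,
      ((univ.filter (fun T : Finset ↥S => i + 1 ≤ (T ∩ S₀).card)).filter
        (fun T => T ∩ S₀ = A)).card = 2 ^ (n - m) := by
    intro A hAt
    simp only [htsetdef, Finset.mem_filter, Finset.mem_powerset] at hAt
    obtain ⟨hAsub, hAcard⟩ := hAt
    have hsimpl : ((univ.filter (fun T : Finset ↥S => i + 1 ≤ (T ∩ S₀).card)).filter
        (fun T => T ∩ S₀ = A)) = univ.filter (fun T : Finset ↥S => T ∩ S₀ = A) := by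
      ext T
      simp only [Finset.mem_filter, mem_univ, true_and]
      constructor
      · tauto
      · intro h
        exact ⟨by rw [h]; exact hAcard, h⟩
    rw [hsimpl]
    have hcompl : ((univ : Finset ↥S) \ S₀).card = n - m := by
      rw [Finset.card_sdiff_of_subset (Finset.subset_univ _), Finset.card_univ, Fintype.card_coe,
        hcardS, hS₀card]
    rw [← hcompl, ← Finset.card_powerset]
    apply Finset.card_bij' (fun T _ => T \ S₀) (fun B _ => A ∪ B)
    · intro T hT
      simp only [Finset.mem_filter, mem_univ, true_and, Finset.mem_powerset] at hT ⊢
      exact Finset.sdiff_subset_sdiff (Finset.subset_univ T) (le_refl S₀)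
    · intro B hB
      simp only [Finset.mem_powerset] at hB
      simp only [Finset.mem_filter, mem_univ, true_and]
      ext z
      simp only [Finset.mem_inter, Finset.mem_union]
      constructor
      · rintro ⟨h1 | h1, h2⟩
        · exact h1
        · have := Finset.mem_sdiff.1 (hB h1)
          exact absurd h2 this.2
      · intro h
        exact ⟨Or.inl h, hAsub h⟩
    · intro T hT
      simp only [Finset.mem_filter, mem_univ, true_and] at hT
      ext z
      simp only [Finset.mem_union, Finset.mem_sdiff]
      constructor
      · rintro (h | ⟨h, _⟩)
        · have : z ∈ T ∩ S₀ := by rw [hT]; exact h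
          exact (Finset.mem_inter.1 this).1
        · exact h
      · intro h
        by_cases hz : z ∈ S₀
        · left
          rw [← hT]
          exact Finset.mem_inter.2 ⟨h, hz⟩
        · right
          exact ⟨h, hz⟩
    · intro B hB
      simp only [Finset.mem_powerset] at hB
      ext z
      simp only [Finset.mem_sdiff, Finset.mem_union]
      constructor
      · rintro ⟨h | h, hz⟩
        · exact absurd (hAsub h) hz
        · exact h
      · intro h
        have := Finset.mem_sdiff.1 (hB h)
        exact ⟨Or.inr h, this.2⟩
  rw [Finset.sum_congr rfl hfiber] at hcount1
  rw [Finset.sum_const, smul_eq_mul] at hcount1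
  -- count tset
  have hcardtset : tset.card = ∑ k ∈ range (j + 1), m.choose (i + 1 + k) := by
    have hmap : ∀ A ∈ tset, A.card ∈ Finset.Icc (i + 1) m := by
      intro A hA
      simp only [htsetdef, Finset.mem_filter, Finset.mem_powerset] at hA
      rw [Finset.mem_Icc]
      exact ⟨hA.2, le_trans (Finset.card_le_card hA.1) (le_of_eq hS₀card)⟩
    have h1 := Finset.card_eq_sum_card_fiberwise hmap
    have h2 : ∀ c ∈ Finset.Icc (i + 1) m,
        (tset.filter (fun A => A.card = c)).card = m.choose c := by
      intro c hc
      rw [Finset.mem_Icc] at hc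
      have : tset.filter (fun A => A.card = c) = Finset.powersetCard c S₀ := by
        ext A
        simp only [htsetdef, Finset.mem_filter, Finset.mem_powerset, Finset.mem_powersetCard]
        constructor
        · rintro ⟨⟨h1, _⟩, h3⟩
          exact ⟨h1, h3⟩
        · rintro ⟨h1, h2⟩
          exact ⟨⟨h1, by omega⟩, h2⟩
      rw [this, Finset.card_powersetCard, hS₀card]
    rw [h1, Finset.sum_congr rfl h2]
    rw [← Finset.Ico_succ_right_eq_Icc, Order.succ_eq_add_one, Finset.sum_Ico_eq_sum_range]
    apply Finset.sum_congr
    · congr 1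
      omega
    · intro k _
      rfl
  rw [hcount1, hcardtset, natId i j]
  -- final arithmetic
  push_cast
  rw [Finset.sum_mul, Finset.sum_div]
  apply Finset.sum_congr rfl
  intro k hk
  rw [Finset.mem_range] at hk
  have hpow : (2:ℝ) ^ (j - k) * 2 ^ (n - m) * 2 ^ (i + k + 1) = 2 ^ n := by
    rw [← pow_add, ← pow_add]
    congr 1
    omega
  rw [div_eq_div_iff (by positivity) (by positivity)]
  calc ((i+k).choose k : ℝ) * 2 ^ (j - k) * 2 ^ (n - m) * 2 ^ (i + k + 1)
      = ((i+k).choose k : ℝ) * (2 ^ (j - k) * 2 ^ (n - m) * 2 ^ (i + k + 1)) := by ring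
    _ = ((i+k).choose k : ℝ) * 2 ^ n := by rw [hpow]
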